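/- For every q ∈ [0,1], every N ≥ 2 and every finite sequence of indices i_1, …, i_n ∈ {1, …, N−1}, the probability measure (π_{i_n} ∘ ⋯ ∘ π_{i_1})(δ_id) on S_N (obtained by applying π_{i_1} first and π_{i_n} last to the point mass at the identity permutation) equals the pushforward under the inversion map x ↦ x⁻¹ of the probability measure (π_{i_1} ∘ ⋯ ∘ π_{i_n})(δ_id) obtained by applying the same operators in the reverse order. -/

import Mathlib

open MeasureTheory
open scoped NNReal

/-- Equip the finite symmetric group `S_N` with the discrete (full) σ-algebra. -/
instance (N : ℕ) : MeasurableSpace (Equiv.Perm (Fin N)) := ⊤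

/-- The adjacent transposition `s_i` of `{1, …, N}` exchanging `i` and `i+1`
(for `1 ≤ i ≤ N−1`; positions in `Fin N` are 0-indexed, so `s_i` swaps the
0-indexed positions `i−1` and `i`). -/
def adjT (N : ℕ) (i : {i : ℕ // 1 ≤ i ∧ i < N}) : Equiv.Perm (Fin N) :=
  Equiv.swap ⟨i.1 - 1, by omega⟩ ⟨i.1, i.2.2⟩

/-- The operator `τ_i : η ↦ η ∘ s_i`, exchanging the entries in positions
`i` and `i+1`. -/
def tauP (N : ℕ) (i : {i : ℕ // 1 ≤ i ∧ i < N}) (η : Equiv.Perm (Fin N)) :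
    Equiv.Perm (Fin N) :=
  η * adjT N i

/-- The operator `σ_i : η ↦ η ∘ s_i` if `η(i) < η(i+1)` and `η ↦ η` otherwise,
sorting positions `i`, `i+1` into decreasing order. -/
def sigmaP (N : ℕ) (i : {i : ℕ // 1 ≤ i ∧ i < N}) (η : Equiv.Perm (Fin N)) :
    Equiv.Perm (Fin N) :=
  if η ⟨i.1 - 1, by omega⟩ < η ⟨i.1, i.2.2⟩ then η * adjT N i else η

/-- The Markov operator `π_i ν = q·(τ_i)_*ν + (1−q)·(σ_i)_*ν` on measures
on `S_N`. -/
noncomputable def piP (N : ℕ) (q : ℝ≥0) (i : {i : ℕ // 1 ≤ i ∧ i < N})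
    (ν : Measure (Equiv.Perm (Fin N))) : Measure (Equiv.Perm (Fin N)) :=
  q • ν.map (tauP N i) + (1 - q) • ν.map (sigmaP N i)

namespace PiPAux

open Equiv
open scoped ENNReal

variable {N : ℕ}

abbrev Idx (N : ℕ) := {i : ℕ // 1 ≤ i ∧ i < N}
abbrev P (N : ℕ) := Equiv.Perm (Fin N)

def lo (i : Idx N) : Fin N := ⟨i.1 - 1, by omega⟩
def hi (i : Idx N) : Fin N := ⟨i.1, i.2.2⟩

lemma adjT_eq (i : Idx N) : adjT N i = Equiv.swap (lo i) (hi i) := rfl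

lemma lo_lt_hi (i : Idx N) : lo i < hi i := by
  simp only [lo, hi, Fin.lt_def]
  have := i.2.1
  omega

lemma lo_ne_hi (i : Idx N) : lo i ≠ hi i := ne_of_lt (lo_lt_hi i)

lemma adjT_mul_self (i : Idx N) : adjT N i * adjT N i = 1 :=
  Equiv.swap_mul_self _ _

lemma adjT_inv (i : Idx N) : (adjT N i)⁻¹ = adjT N i := Equiv.swap_inv _ _

lemma adjT_lo (i : Idx N) : adjT N i (lo i) = hi i := Equiv.swap_apply_left _ _
lemma adjT_hi (i : Idx N) : adjT N i (hi i) = lo i := Equiv.swap_apply_right _ _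

/-- adjacent swap is order preserving away from the exceptional pair -/
lemma adjT_lt_iff (i : Idx N) {x y : Fin N}
    (h1 : ¬(x = lo i ∧ y = hi i)) (h2 : ¬(x = hi i ∧ y = lo i)) :
    adjT N i x < adjT N i y ↔ x < y := by
  rw [adjT_eq]
  have hlo : (lo i).1 + 1 = (hi i).1 := by
    have := i.2.1
    simp only [lo, hi]
    omega
  rcases eq_or_ne x (lo i) with rfl | hx1
  · rcases eq_or_ne y (lo i) with rfl | hy1
    · simp
    · rcases eq_or_ne y (hi i) with rfl | hy2
      · exact absurd ⟨rfl, rfl⟩ h1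
      · rw [Equiv.swap_apply_left, Equiv.swap_apply_of_ne_of_ne hy1 hy2]
        have n1 : y.1 ≠ (lo i).1 := fun h => hy1 (Fin.ext h)
        have n2 : y.1 ≠ (hi i).1 := fun h => hy2 (Fin.ext h)
        simp only [Fin.lt_def]
        omega
  · rcases eq_or_ne x (hi i) with rfl | hx2
    · rcases eq_or_ne y (lo i) with rfl | hy1
      · exact absurd ⟨rfl, rfl⟩ h2
      · rcases eq_or_ne y (hi i) with rfl | hy2
        · simp
        · rw [Equiv.swap_apply_right, Equiv.swap_apply_of_ne_of_ne hy1 hy2]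
          have n1 : y.1 ≠ (lo i).1 := fun h => hy1 (Fin.ext h)
          have n2 : y.1 ≠ (hi i).1 := fun h => hy2 (Fin.ext h)
          simp only [Fin.lt_def]
          omega
    · have n1 : x.1 ≠ (lo i).1 := fun h => hx1 (Fin.ext h)
      have n2 : x.1 ≠ (hi i).1 := fun h => hx2 (Fin.ext h)
      rw [Equiv.swap_apply_of_ne_of_ne hx1 hx2]
      rcases eq_or_ne y (lo i) with rfl | hy1
      · rw [Equiv.swap_apply_left]
        simp only [Fin.lt_def]
        omega
      · rcases eq_or_ne y (hi i) with rfl | hy2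
        · rw [Equiv.swap_apply_right]
          simp only [Fin.lt_def]
          omega
        · rw [Equiv.swap_apply_of_ne_of_ne hy1 hy2]

/-- decreasing condition at letter `i` -/
def decC (i : Idx N) (η : P N) : Prop := η (hi i) < η (lo i)

instance (i : Idx N) (η : P N) : Decidable (decC i η) :=
  inferInstanceAs (Decidable (_ < _))

lemma not_decC_one (i : Idx N) : ¬ decC i (1 : P N) := by
  simp only [decC, Equiv.Perm.one_apply]
  exact lt_asymm (lo_lt_hi i)

lemma decC_adjT (i : Idx N) : decC i (adjT N i) := by
  simp only [decC, adjT_lo, adjT_hi]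
  exact lo_lt_hi i

section Ops

variable (q : ℝ≥0)

noncomputable def Rop (i : Idx N) (f : P N → ℝ≥0∞) : P N → ℝ≥0∞ :=
  fun η => (q : ℝ≥0∞) * f (η * adjT N i)
    + ((1 - q : ℝ≥0) : ℝ≥0∞) * (if decC i η then f η + f (η * adjT N i) else 0)

noncomputable def Lop (i : Idx N) (f : P N → ℝ≥0∞) : P N → ℝ≥0∞ :=
  fun η => (q : ℝ≥0∞) * f (adjT N i * η)
    + ((1 - q : ℝ≥0) : ℝ≥0∞) * (if decC i η⁻¹ then f η + f (adjT N i * η) else 0)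

/-- Characterization of when left and right multiplications coincide. -/
lemma sEq_iff (i j : Idx N) (η : P N) :
    adjT N i * η = η * adjT N j ↔
      ((η (lo j) = lo i ∧ η (hi j) = hi i) ∨ (η (lo j) = hi i ∧ η (hi j) = lo i)) := by
  constructor
  · intro hE
    have h1 : adjT N i (η (lo j)) = η (hi j) := by
      have := congrArg (fun σ : P N => σ (lo j)) hE
      simpa [Equiv.Perm.mul_apply, adjT_lo] using this
    have hne : η (lo j) ≠ η (hi j) := η.injective.ne (lo_ne_hi j)
    have hmem : η (lo j) = lo i ∨ η (lo j) = hi i := by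
      by_contra hc
      push_neg at hc
      rw [adjT_eq, Equiv.swap_apply_of_ne_of_ne hc.1 hc.2] at h1
      exact hne h1
    rcases hmem with h | h
    · left
      refine ⟨h, ?_⟩
      rw [h, adjT_lo] at h1
      exact h1.symm
    · right
      refine ⟨h, ?_⟩
      rw [h, adjT_hi] at h1
      exact h1.symm
  · intro hc
    ext x
    simp only [Equiv.Perm.mul_apply]
    rcases eq_or_ne x (lo j) with rfl | hx
    · rcases hc with ⟨h1, h2⟩ | ⟨h1, h2⟩ <;>
        simp [adjT_lo, adjT_hi, h1, h2]
    · rcases eq_or_ne x (hi j) with rfl | hx'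
      · rcases hc with ⟨h1, h2⟩ | ⟨h1, h2⟩ <;>
          simp [adjT_lo, adjT_hi, h1, h2]
      · rw [adjT_eq j, Equiv.swap_apply_of_ne_of_ne hx hx']
        have e1 : η x ≠ lo i := by
          rcases hc with ⟨h1, _⟩ | ⟨_, h2⟩
          · rw [← h1]; exact η.injective.ne hx
          · rw [← h2]; exact η.injective.ne hx'
        have e2 : η x ≠ hi i := by
          rcases hc with ⟨_, h2⟩ | ⟨h1, _⟩
          · rw [← h2]; exact η.injective.ne hx'
          · rw [← h1]; exact η.injective.ne hx
        rw [adjT_eq i, Equiv.swap_apply_of_ne_of_ne e1 e2]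

/-- The key commutation: left and right Markov operators commute. -/
lemma comm (i j : Idx N) (f : P N → ℝ≥0∞) (η : P N) :
    Rop q j (Lop q i f) η = Lop q i (Rop q j f) η := by
  by_cases hE : adjT N i * η = η * adjT N j
  · have h4 : adjT N i * (η * adjT N j) = η := by
      rw [← hE, ← mul_assoc, adjT_mul_self, one_mul]
    have h5 : adjT N i * η * adjT N j = η := by
      rw [hE, mul_assoc, adjT_mul_self, mul_one]
    rcases (sEq_iff i j η).mp hE with ⟨h1, h2⟩ | ⟨h1, h2⟩
    · -- η (lo j) = lo i, η (hi j) = hi i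
      have hinv1 : η⁻¹ (lo i) = lo j := by rw [← h1]; exact η.symm_apply_apply _
      have hinv2 : η⁻¹ (hi i) = hi j := by rw [← h2]; exact η.symm_apply_apply _
      have hB : ¬ decC j η := by
        simp only [decC, h1, h2]; exact lt_asymm (lo_lt_hi i)
      have hA : ¬ decC i η⁻¹ := by
        simp only [decC, hinv1, hinv2]; exact lt_asymm (lo_lt_hi j)
      have hA' : decC i (η * adjT N j)⁻¹ := by
        simp only [decC, mul_inv_rev, adjT_inv, Equiv.Perm.mul_apply,
          hinv1, hinv2, adjT_lo, adjT_hi]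
        exact lo_lt_hi j
      have hB' : decC j (adjT N i * η) := by
        simp only [decC, Equiv.Perm.mul_apply, h1, h2, adjT_lo, adjT_hi]
        exact lo_lt_hi i
      simp only [Rop, Lop, if_pos hA', if_pos hB', if_neg hA, if_neg hB,
        h4, h5, mul_zero, add_zero]
      try rw [← hE]
      try ring
    · -- η (lo j) = hi i, η (hi j) = lo i
      have hinv1 : η⁻¹ (hi i) = lo j := by rw [← h1]; exact η.symm_apply_apply _
      have hinv2 : η⁻¹ (lo i) = hi j := by rw [← h2]; exact η.symm_apply_apply _
      have hB : decC j η := by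
        simp only [decC, h1, h2]; exact lo_lt_hi i
      have hA : decC i η⁻¹ := by
        simp only [decC, hinv1, hinv2]; exact lo_lt_hi j
      have hA' : ¬ decC i (η * adjT N j)⁻¹ := by
        simp only [decC, mul_inv_rev, adjT_inv, Equiv.Perm.mul_apply,
          hinv1, hinv2, adjT_lo, adjT_hi]
        exact lt_asymm (lo_lt_hi j)
      have hB' : ¬ decC j (adjT N i * η) := by
        simp only [decC, Equiv.Perm.mul_apply, h1, h2, adjT_lo, adjT_hi]
        exact lt_asymm (lo_lt_hi i)
      simp only [Rop, Lop, if_pos hA, if_pos hB, if_neg hA', if_neg hB',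
        h4, h5, mul_zero, add_zero]
      try rw [← hE]
      try ring
  · obtain ⟨hc1, hc2⟩ : ¬(η (lo j) = lo i ∧ η (hi j) = hi i)
        ∧ ¬(η (lo j) = hi i ∧ η (hi j) = lo i) := by
      constructor <;> intro hc <;> exact hE ((sEq_iff i j η).mpr (by tauto))
    have hB' : decC j (adjT N i * η) ↔ decC j η := by
      simp only [decC, Equiv.Perm.mul_apply]
      exact adjT_lt_iff i (by tauto) (by tauto)
    have hA' : decC i (η * adjT N j)⁻¹ ↔ decC i η⁻¹ := by
      have e1 : ¬(η⁻¹ (hi i) = lo j ∧ η⁻¹ (lo i) = hi j) := by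
        intro ⟨u1, u2⟩
        apply hc2
        constructor
        · rw [← u1]; exact η.apply_symm_apply _
        · rw [← u2]; exact η.apply_symm_apply _
      have e2 : ¬(η⁻¹ (hi i) = hi j ∧ η⁻¹ (lo i) = lo j) := by
        intro ⟨u1, u2⟩
        apply hc1
        constructor
        · rw [← u2]; exact η.apply_symm_apply _
        · rw [← u1]; exact η.apply_symm_apply _
      simp only [decC, mul_inv_rev, adjT_inv, Equiv.Perm.mul_apply]
      exact adjT_lt_iff j e1 e2
    simp only [Rop, Lop, hA', hB', ← mul_assoc]
    by_cases hA : decC i η⁻¹ <;> by_cases hB : decC j η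
    · simp only [if_pos hA, if_pos hB]; try ring
    · simp only [if_pos hA, if_neg hB, mul_zero, add_zero]; try ring
    · simp only [if_neg hA, if_pos hB, mul_zero, add_zero]; try ring
    · simp only [if_neg hA, if_neg hB, mul_zero, add_zero]; try ring

-- function-level building blocks --------------------------------------

lemma msAll (s : Set (P N)) : MeasurableSet s := trivial

lemma measAll (f : P N → P N) : Measurable f := fun _ _ => msAll _

/-- point mass at the identity, as a function -/
noncomputable def Dfun : P N → ℝ≥0∞ := fun x => if x = 1 then 1 else 0

lemma adjT_ne_one (i : Idx N) : adjT N i ≠ 1 := by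
  intro h
  have := congrArg (fun σ : P N => σ (lo i)) h
  simp only [adjT_lo, Equiv.Perm.one_apply] at this
  exact lo_ne_hi i this.symm

lemma mul_adjT_eq_one_iff (i : Idx N) (η : P N) : η * adjT N i = 1 ↔ η = adjT N i := by
  constructor
  · intro h
    have : η * adjT N i * adjT N i = adjT N i := by rw [h, one_mul]
    rwa [mul_assoc, adjT_mul_self, mul_one] at this
  · rintro rfl; exact adjT_mul_self i

lemma adjT_mul_eq_one_iff (i : Idx N) (η : P N) : adjT N i * η = 1 ↔ η = adjT N i := by
  constructor
  · intro h
    have : adjT N i * (adjT N i * η) = adjT N i := by rw [h, mul_one]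
    rwa [← mul_assoc, adjT_mul_self, one_mul] at this
  · rintro rfl; exact adjT_mul_self i

lemma decC_inv_adjT (i : Idx N) : decC i (adjT N i)⁻¹ := by
  rw [adjT_inv]; exact decC_adjT i

/-- On the point mass at the identity, the left and right operators agree. -/
lemma Rop_Dfun_eq_Lop_Dfun (q : ℝ≥0) (i : Idx N) :
    Rop q i (Dfun : P N → ℝ≥0∞) = Lop q i Dfun := by
  funext η
  simp only [Rop, Lop, Dfun, mul_adjT_eq_one_iff, adjT_mul_eq_one_iff]
  rcases eq_or_ne η 1 with rfl | h1
  · have h2 : (1 : P N) ≠ adjT N i := fun h => adjT_ne_one i h.symm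
    have hd : ¬ decC i (1 : P N) := not_decC_one i
    have hd' : ¬ decC i ((1 : P N)⁻¹) := by rw [inv_one]; exact not_decC_one i
    simp [h2, hd, hd']
  · rcases eq_or_ne η (adjT N i) with rfl | h2
    · simp [adjT_ne_one i, decC_adjT i, decC_inv_adjT i]
    · have hη1 : ¬ decC i η ∨ True := Or.inr trivial
      simp only [if_neg h2, if_neg h1]
      rcases Classical.em (decC i η) with hd | hd <;>
        rcases Classical.em (decC i η⁻¹) with hd' | hd' <;>
        simp [hd, hd', h1, h2]

/-- The right-fold commutes past a left operator. -/
lemma foldR_Lop (q : ℝ≥0) (i : Idx N) (w : List (Idx N)) (g : P N → ℝ≥0∞) :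
    w.foldl (fun f j => Rop q j f) (Lop q i g)
      = Lop q i (w.foldl (fun f j => Rop q j f) g) := by
  induction w generalizing g with
  | nil => rfl
  | cons j w ih =>
      simp only [List.foldl_cons]
      rw [show Rop q j (Lop q i g) = Lop q i (Rop q j g) from funext (comm q i j g), ih]

/-- Right word fold equals left word fold (in reverse order) on the point mass. -/
lemma foldR_eq_foldr (q : ℝ≥0) (w : List (Idx N)) :
    w.foldl (fun f j => Rop q j f) (Dfun : P N → ℝ≥0∞)
      = w.foldr (fun j f => Lop q j f) Dfun := by
  induction w with
  | nil => rfl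
  | cons i w ih =>
      simp only [List.foldl_cons, List.foldr_cons]
      rw [Rop_Dfun_eq_Lop_Dfun, foldR_Lop, ih]

lemma Lop_inv (q : ℝ≥0) (i : Idx N) (g : P N → ℝ≥0∞) :
    Lop q i (fun x => g x⁻¹) = fun η => Rop q i g η⁻¹ := by
  funext η
  simp only [Lop, Rop, mul_inv_rev, adjT_inv]

lemma foldL_inv (q : ℝ≥0) (v : List (Idx N)) (g : P N → ℝ≥0∞) :
    v.foldl (fun f j => Lop q j f) (fun x => g x⁻¹)
      = fun η => (v.foldl (fun f j => Rop q j f) g) η⁻¹ := by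
  induction v generalizing g with
  | nil => rfl
  | cons j v ih =>
      simp only [List.foldl_cons]
      rw [Lop_inv, ih (Rop q j g)]

/-- The main function-level identity. -/
lemma foldR_reverse (q : ℝ≥0) (w : List (Idx N)) (a : P N) :
    w.foldl (fun f j => Rop q j f) (Dfun : P N → ℝ≥0∞) a
      = w.reverse.foldl (fun f j => Rop q j f) (Dfun : P N → ℝ≥0∞) a⁻¹ := by
  have hD : (fun x : P N => Dfun x⁻¹) = Dfun := by
    funext x; simp only [Dfun, inv_eq_one]
  calc w.foldl (fun f j => Rop q j f) (Dfun : P N → ℝ≥0∞) a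
      = w.foldr (fun j f => Lop q j f) Dfun a := by rw [foldR_eq_foldr]
    _ = w.reverse.foldl (fun f j => Lop q j f) Dfun a := by
        rw [List.foldl_reverse]
    _ = w.reverse.foldl (fun f j => Rop q j f) (Dfun : P N → ℝ≥0∞) a⁻¹ := by
        conv_lhs => rw [← hD, foldL_inv]

-- measure-level lemmas --------------------------------------------------

lemma sigmaP_eq (i : Idx N) (η : P N) :
    sigmaP N i η = if η (lo i) < η (hi i) then η * adjT N i else η := rfl

lemma tau_preimage (i : Idx N) (a : P N) :
    tauP N i ⁻¹' {a} = {a * adjT N i} := by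
  ext η
  simp only [tauP, Set.mem_preimage, Set.mem_singleton_iff]
  constructor
  · rintro rfl; rw [mul_assoc, adjT_mul_self, mul_one]
  · rintro rfl; rw [mul_assoc, adjT_mul_self, mul_one]

lemma lo_hi_trichotomy (i : Idx N) (η : P N) :
    η (lo i) < η (hi i) ∨ decC i η := by
  have hne : η (lo i) ≠ η (hi i) := η.injective.ne (lo_ne_hi i)
  rcases lt_or_gt_of_ne hne with h | h
  · exact Or.inl h
  · exact Or.inr h

lemma sigma_preimage (i : Idx N) (a : P N) :
    sigmaP N i ⁻¹' {a} = if decC i a then {a, a * adjT N i} else ∅ := by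
  ext η
  by_cases hd : decC i a
  · simp only [if_pos hd, Set.mem_preimage, Set.mem_singleton_iff, Set.mem_insert_iff]
    constructor
    · intro h
      by_cases hη : η (lo i) < η (hi i)
      · right
        rw [sigmaP_eq, if_pos hη] at h
        rw [← h, mul_assoc, adjT_mul_self, mul_one]
      · left
        rwa [sigmaP_eq, if_neg hη] at h
    · rintro (rfl | rfl)
      · rw [sigmaP_eq, if_neg (asymm hd)]
      · rw [sigmaP_eq, if_pos ?cond, mul_assoc, adjT_mul_self, mul_one]
        case cond =>
          simp only [Equiv.Perm.mul_apply, adjT_lo, adjT_hi]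
          exact hd
  · simp only [if_neg hd, Set.mem_preimage, Set.mem_empty_iff_false, iff_false,
      Set.mem_singleton_iff]
    intro h
    by_cases hη : η (lo i) < η (hi i)
    · rw [sigmaP_eq, if_pos hη] at h
      apply hd
      rw [← h]
      simp only [decC, Equiv.Perm.mul_apply, adjT_lo, adjT_hi]
      exact hη
    · rw [sigmaP_eq, if_neg hη] at h
      subst h
      rcases lo_hi_trichotomy i η with h' | h'
      · exact hη h'
      · exact hd h'

lemma piP_apply (q : ℝ≥0) (i : Idx N) (ν : Measure (P N)) (a : P N) :
    piP N q i ν {a} = Rop q i (fun x => ν {x}) a := by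
  have hne : a ≠ a * adjT N i := by
    intro h
    apply adjT_ne_one i
    have := congrArg (fun σ => a⁻¹ * σ) h
    simpa [← mul_assoc] using this.symm
  rw [piP, Measure.add_apply, Measure.smul_apply, Measure.smul_apply,
    Measure.map_apply (measAll _) (msAll _),
    Measure.map_apply (measAll _) (msAll _),
    tau_preimage, sigma_preimage]
  by_cases hd : decC i a
  · rw [if_pos hd]
    have : ({a, a * adjT N i} : Set (P N)) = {a} ∪ {a * adjT N i} := rfl
    rw [this, measure_union (by simpa using hne) (msAll _)]
    simp only [Rop, if_pos hd, smul_eq_mul, ENNReal.smul_def]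
  · rw [if_neg hd]
    simp only [Rop, if_neg hd, measure_empty, smul_eq_mul, ENNReal.smul_def, mul_zero]

lemma fold_apply (q : ℝ≥0) (w : List (Idx N)) (ν : Measure (P N)) (a : P N) :
    (w.foldl (fun ν i => piP N q i ν) ν) {a}
      = (w.foldl (fun f i => Rop q i f) (fun x => ν {x})) a := by
  induction w generalizing ν with
  | nil => rfl
  | cons i w ih =>
      have hfun : (fun x => (piP N q i ν) {x}) = Rop q i (fun x => ν {x}) :=
        funext fun x => piP_apply q i ν x
      simp only [List.foldl_cons]
      rw [ih, hfun]

lemma dirac_fun : (fun x : P N => (Measure.dirac (1 : P N)) {x}) = Dfun := by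
  funext x
  rw [Measure.dirac_apply' _ (msAll _)]
  simp only [Dfun, Set.indicator_apply, Set.mem_singleton_iff, Pi.one_apply]
  by_cases h : x = 1
  · subst h; simp
  · rw [if_neg (fun hh : (1 : P N) = x => h hh.symm), if_neg h]

end Ops

end PiPAux

/-- Applying `π_{i_1}, …, π_{i_n}` in order to the point mass at the identity
(i.e. forming `(π_{i_n} ∘ ⋯ ∘ π_{i_1})(δ_id)`) yields the pushforward, under
the inversion map `x ↦ x⁻¹`, of the measure obtained by applying the same
operators in the reverse order. -/
theorem piP_reverse_word_inverse (q : ℝ≥0) (hq : q ≤ 1) (N : ℕ) (hN : 2 ≤ N)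
    (w : List {i : ℕ // 1 ≤ i ∧ i < N}) :
    w.foldl (fun ν i => piP N q i ν) (Measure.dirac 1) =
      Measure.map (fun x => x⁻¹)
        (w.reverse.foldl (fun ν i => piP N q i ν) (Measure.dirac 1)) := by
  apply Measure.ext_of_singleton
  intro a
  rw [Measure.map_apply (PiPAux.measAll _) (PiPAux.msAll _)]
  have hpre : (fun x : Equiv.Perm (Fin N) => x⁻¹) ⁻¹' {a} = {a⁻¹} := by
    ext x
    simp [inv_eq_iff_eq_inv]
  rw [hpre, PiPAux.fold_apply, PiPAux.fold_apply, PiPAux.dirac_fun]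
  exact PiPAux.foldR_reverse q w a
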